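/- Let r > 0 and let σ = (σ_k)_{k≥1} be a non-increasing sequence of positive real numbers with σ_k → 0 and ∑_{k≥1} σ_k^r < ∞, with tail sequence τ_n = (∑_{k≥n} σ_k^r)^{1/r}. If there exist constants c₁, c₂ > 0 such that c₁ σ_n ≤ σ_{2n} ≤ c₂ σ_n for all n ≥ 1, then there exist constants d₁, d₂ > 0 such that d₁ τ_n ≤ τ_{2n} ≤ d₂ τ_n for all n ≥ 1. If, in addition, there exists α > 1/r such that sup{ σ_n n^α / (σ_k k^α) : k ≤ n } < ∞, then the converse also holds, i.e. σ_n ≍ σ_{2n} if and only if τ_n ≍ τ_{2n}. -/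

import Mathlib

open Filter

namespace S19

noncomputable def S (r : ℝ) (σ : ℕ → ℝ) (n : ℕ) : ℝ :=
  ∑' k : ℕ, if n ≤ k then σ k ^ r else 0

variable {r : ℝ} {σ : ℕ → ℝ}

lemma term_nonneg (hpos : ∀ k, 1 ≤ k → 0 < σ k) (n : ℕ) (hn : 1 ≤ n) (k : ℕ) :
    0 ≤ if n ≤ k then σ k ^ r else 0 := by
  split_ifs with h
  · exact Real.rpow_nonneg (hpos k (le_trans hn h)).le _
  · exact le_rfl

lemma summable_aux (hpos : ∀ k, 1 ≤ k → 0 < σ k)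
    (hsum : Summable (fun k : ℕ => if 1 ≤ k then σ k ^ r else 0))
    (n : ℕ) (hn : 1 ≤ n) :
    Summable (fun k : ℕ => if n ≤ k then σ k ^ r else 0) := by
  apply Summable.of_nonneg_of_le (term_nonneg hpos n hn) _ hsum
  intro k
  by_cases h : n ≤ k
  · rw [if_pos h, if_pos (le_trans hn h)]
  · rw [if_neg h]
    exact term_nonneg hpos 1 le_rfl k

lemma block (hpos : ∀ k, 1 ≤ k → 0 < σ k)
    (hsum : Summable (fun k : ℕ => if 1 ≤ k then σ k ^ r else 0))
    {m n : ℕ} (hm : 1 ≤ m) (hmn : m ≤ n) :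
    S r σ m = (∑ k ∈ Finset.Ico m n, σ k ^ r) + S r σ n := by
  have hfun : ∀ k, (if m ≤ k then σ k ^ r else 0) =
      (if k ∈ Finset.Ico m n then σ k ^ r else 0) + (if n ≤ k then σ k ^ r else 0) := by
    intro k
    rcases le_or_gt n k with h2 | h2
    · rw [if_pos (le_trans hmn h2), if_pos h2, if_neg (by simp [Finset.mem_Ico]; omega),
        zero_add]
    · by_cases h1 : m ≤ k
      · rw [if_pos h1, if_neg (not_le.mpr h2), if_pos (by simp [Finset.mem_Ico, h1, h2]),
          add_zero]
      · rw [if_neg h1, if_neg (not_le.mpr h2), if_neg (by simp [Finset.mem_Ico]; omega),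
          add_zero]
  have hs1 : Summable (fun k : ℕ => if k ∈ Finset.Ico m n then σ k ^ r else 0) :=
    summable_of_ne_finset_zero (s := Finset.Ico m n) (fun b hb => if_neg hb)
  have hs2 := summable_aux hpos hsum n (le_trans hm hmn)
  have : S r σ m = (∑' k : ℕ, if k ∈ Finset.Ico m n then σ k ^ r else 0) + S r σ n := by
    rw [S, tsum_congr hfun, Summable.tsum_add hs1 hs2]; rfl
  rw [this, tsum_eq_sum (s := Finset.Ico m n) (fun b hb => if_neg hb)]
  congr 1
  exact Finset.sum_congr rfl (fun k hk => if_pos hk)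


lemma S_nonneg (hpos : ∀ k, 1 ≤ k → 0 < σ k) (n : ℕ) (hn : 1 ≤ n) : 0 ≤ S r σ n :=
  tsum_nonneg (term_nonneg hpos n hn)

lemma S_pos (hpos : ∀ k, 1 ≤ k → 0 < σ k)
    (hsum : Summable (fun k : ℕ => if 1 ≤ k then σ k ^ r else 0))
    (n : ℕ) (hn : 1 ≤ n) : 0 < S r σ n := by
  have h1 : σ n ^ r ≤ S r σ n := by
    have := Summable.le_tsum (summable_aux hpos hsum n hn) n
      (fun m _ => term_nonneg hpos n hn m)
    simpa [S] using this
  exact lt_of_lt_of_le (Real.rpow_pos_of_pos (hpos n hn) r) h1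

lemma S_anti (hpos : ∀ k, 1 ≤ k → 0 < σ k)
    (hsum : Summable (fun k : ℕ => if 1 ≤ k then σ k ^ r else 0))
    {m n : ℕ} (hm : 1 ≤ m) (hmn : m ≤ n) : S r σ n ≤ S r σ m := by
  rw [block hpos hsum hm hmn]
  have : 0 ≤ ∑ k ∈ Finset.Ico m n, σ k ^ r :=
    Finset.sum_nonneg (fun k hk => Real.rpow_nonneg
      (hpos k (le_trans hm (Finset.mem_Ico.mp hk).1)).le _)
  linarith

lemma block_upper (hr : 0 < r) (hpos : ∀ k, 1 ≤ k → 0 < σ k)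
    (hanti : ∀ m n : ℕ, 1 ≤ m → m ≤ n → σ n ≤ σ m)
    {m n : ℕ} (hm : 1 ≤ m) (hmn : m ≤ n) :
    (∑ k ∈ Finset.Ico m n, σ k ^ r) ≤ (n - m : ℕ) * σ m ^ r := by
  have : ∀ k ∈ Finset.Ico m n, σ k ^ r ≤ σ m ^ r := by
    intro k hk
    exact Real.rpow_le_rpow (hpos k (le_trans hm (Finset.mem_Ico.mp hk).1)).le
      (hanti m k hm (Finset.mem_Ico.mp hk).1) hr.le
  calc (∑ k ∈ Finset.Ico m n, σ k ^ r) ≤ ∑ _k ∈ Finset.Ico m n, σ m ^ r :=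
        Finset.sum_le_sum this
    _ = (n - m : ℕ) * σ m ^ r := by rw [Finset.sum_const, Nat.card_Ico, nsmul_eq_mul]

lemma block_lower (hr : 0 < r) (hpos : ∀ k, 1 ≤ k → 0 < σ k)
    (hanti : ∀ m n : ℕ, 1 ≤ m → m ≤ n → σ n ≤ σ m)
    {m n : ℕ} (hm : 1 ≤ m) (hmn : m ≤ n) :
    (n - m : ℕ) * σ n ^ r ≤ ∑ k ∈ Finset.Ico m n, σ k ^ r := by
  have hn : 1 ≤ n := le_trans hm hmn
  have : ∀ k ∈ Finset.Ico m n, σ n ^ r ≤ σ k ^ r := by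
    intro k hk
    have hk1 := Finset.mem_Ico.mp hk
    exact Real.rpow_le_rpow (hpos n hn).le
      (hanti k n (le_trans hm hk1.1) hk1.2.le) hr.le
  calc ((n - m : ℕ) : ℝ) * σ n ^ r = ∑ _k ∈ Finset.Ico m n, σ n ^ r := by
        rw [Finset.sum_const, Nat.card_Ico, nsmul_eq_mul]
    _ ≤ ∑ k ∈ Finset.Ico m n, σ k ^ r := Finset.sum_le_sum this

lemma S_tendsto (hpos : ∀ k, 1 ≤ k → 0 < σ k)
    (hsum : Summable (fun k : ℕ => if 1 ≤ k then σ k ^ r else 0)) :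
    Tendsto (S r σ) atTop (nhds 0) := by
  have h1 : Tendsto (fun n => ∑ k ∈ Finset.range n, if 1 ≤ k then σ k ^ r else 0)
      atTop (nhds (S r σ 1)) := hsum.hasSum.tendsto_sum_nat
  have h2 : ∀ n, 1 ≤ n → S r σ n = S r σ 1 -
      ∑ k ∈ Finset.range n, if 1 ≤ k then σ k ^ r else 0 := by
    intro n hn
    have hb := block hpos hsum le_rfl hn
    have : (∑ k ∈ Finset.range n, if 1 ≤ k then σ k ^ r else 0)
        = ∑ k ∈ Finset.Ico 1 n, σ k ^ r := by
      rw [Finset.range_eq_Ico]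
      rw [← Finset.sum_subset (Finset.Ico_subset_Ico (Nat.zero_le 1) le_rfl)]
      · exact Finset.sum_congr rfl (fun k hk => if_pos (Finset.mem_Ico.mp hk).1)
      · intro k hk hk2
        simp only [Finset.mem_Ico] at hk hk2
        rw [if_neg (by omega)]
    rw [this]; linarith
  have h3 : Tendsto (fun n => S r σ 1 -
      ∑ k ∈ Finset.range n, if 1 ≤ k then σ k ^ r else 0) atTop (nhds 0) := by
    have := (tendsto_const_nhds (x := S r σ 1) (f := atTop (α := ℕ))).sub h1
    simpa using this
  exact Tendsto.congr' (by filter_upwards [eventually_ge_atTop 1] with n hn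
    using (h2 n hn).symm) h3


lemma S_le_of_reg (hr : 0 < r) (hpos : ∀ k, 1 ≤ k → 0 < σ k)
    (hanti : ∀ m n : ℕ, 1 ≤ m → m ≤ n → σ n ≤ σ m)
    (hsum : Summable (fun k : ℕ => if 1 ≤ k then σ k ^ r else 0))
    {α C : ℝ} (hα : 1 / r < α)
    (hreg : ∀ k n : ℕ, 1 ≤ k → k ≤ n → σ n * (n : ℝ) ^ α / (σ k * (k : ℝ) ^ α) ≤ C) :
    ∃ K : ℝ, 0 < K ∧ ∀ m : ℕ, 1 ≤ m → S r σ m ≤ K * m * σ m ^ r := by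
  have hC1 : 1 ≤ C := by
    have h1 := hreg 1 1 le_rfl le_rfl
    have h2 : (0:ℝ) < σ 1 * ((1:ℕ):ℝ) ^ α :=
      mul_pos (hpos 1 le_rfl) (Real.rpow_pos_of_pos (by norm_num) _)
    rwa [div_self h2.ne'] at h1
  have hC0 : 0 < C := lt_of_lt_of_le one_pos hC1
  have hαr : 1 < α * r := by
    rw [div_lt_iff₀ hr] at hα; linarith
  set t : ℝ := (2 : ℝ) ^ (1 - α * r) with ht_def
  have ht0 : 0 < t := Real.rpow_pos_of_pos two_pos _
  have ht1 : t < 1 := Real.rpow_lt_one_of_one_lt_of_neg one_lt_two (by linarith)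
  have hσr_nonneg : ∀ k, 1 ≤ k → (0:ℝ) ≤ σ k ^ r := fun k hk =>
    Real.rpow_nonneg (hpos k hk).le _
  -- decay estimate
  have hdecay : ∀ m j : ℕ, 1 ≤ m →
      σ (2 ^ j * m) ≤ C * σ m * (2 : ℝ) ^ (-((j : ℝ) * α)) := by
    intro m j hm
    have hmR : (0 : ℝ) < (m : ℝ) := by exact_mod_cast hm
    have hσm := hpos m hm
    have hmα : (0 : ℝ) < (m : ℝ) ^ α := Real.rpow_pos_of_pos hmR _
    have hden : (0 : ℝ) < σ m * (m : ℝ) ^ α := by positivity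
    have h1 := hreg m (2 ^ j * m) hm (Nat.le_mul_of_pos_left m (by positivity))
    rw [div_le_iff₀ hden] at h1
    have hcast : ((2 ^ j * m : ℕ) : ℝ) ^ α = (2 : ℝ) ^ ((j : ℝ) * α) * (m : ℝ) ^ α := by
      push_cast
      rw [Real.mul_rpow (by positivity) hmR.le]
      congr 1
      rw [← Real.rpow_natCast (2 : ℝ) j, ← Real.rpow_mul (by norm_num)]
    rw [hcast] at h1
    have h2pos : (0 : ℝ) < (2 : ℝ) ^ ((j : ℝ) * α) := Real.rpow_pos_of_pos two_pos _
    have h2 : σ (2 ^ j * m) * (2 : ℝ) ^ ((j : ℝ) * α) ≤ C * σ m :=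
      (mul_le_mul_iff_of_pos_right hmα).mp (by linear_combination h1)
    rw [Real.rpow_neg (by norm_num), ← div_eq_mul_inv, le_div_iff₀ h2pos]
    exact h2
  -- inductive tail bound
  have key : ∀ m : ℕ, 1 ≤ m → ∀ J : ℕ,
      S r σ m ≤ C ^ r * σ m ^ r * m * (∑ j ∈ Finset.range J, t ^ j)
        + S r σ (2 ^ J * m) := by
    intro m hm J
    have hσm := hpos m hm
    induction J with
    | zero => simp
    | succ J ih =>
      have hmJ : (1 : ℕ) ≤ 2 ^ J * m :=
        le_trans hm (Nat.le_mul_of_pos_left m (by positivity))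
      have hle : (2:ℕ) ^ J * m ≤ 2 ^ (J + 1) * m :=
        Nat.mul_le_mul_right m (Nat.pow_le_pow_right (by norm_num) (Nat.le_succ J))
      have hblock := block hpos hsum hmJ hle
      have hbu := block_upper hr hpos hanti hmJ hle
      have h2 : (2:ℕ) ^ (J + 1) * m = 2 ^ J * m + 2 ^ J * m := by ring
      have hcard : ((2 ^ (J + 1) * m - 2 ^ J * m : ℕ) : ℝ) = ((2 ^ J * m : ℕ) : ℝ) := by
        congr 1; omega
      rw [hcard] at hbu
      -- bound the term σ (2^J m) ^ r
      have hσJ : σ (2 ^ J * m) ^ r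
          ≤ C ^ r * σ m ^ r * (2 : ℝ) ^ (-((J : ℝ) * α) * r) := by
        have hd := hdecay m J hm
        have h2J : (0:ℝ) < (2 : ℝ) ^ (-((J : ℝ) * α)) := Real.rpow_pos_of_pos two_pos _
        calc σ (2 ^ J * m) ^ r ≤ (C * σ m * (2 : ℝ) ^ (-((J : ℝ) * α))) ^ r :=
              Real.rpow_le_rpow (hpos _ hmJ).le hd hr.le
          _ = C ^ r * σ m ^ r * (2 : ℝ) ^ (-((J : ℝ) * α) * r) := by
              rw [Real.mul_rpow (by positivity) h2J.le,
                Real.mul_rpow hC0.le hσm.le,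
                Real.rpow_mul (by norm_num : (0:ℝ) ≤ 2) (-((J : ℝ) * α)) r]
      have hterm : ((2 ^ J * m : ℕ) : ℝ) * σ (2 ^ J * m) ^ r
          ≤ C ^ r * σ m ^ r * m * t ^ J := by
        have h2Jm : (0:ℝ) ≤ ((2 ^ J * m : ℕ) : ℝ) := by positivity
        have step := mul_le_mul_of_nonneg_left hσJ h2Jm
        apply le_trans step
        apply le_of_eq
        have hcast2 : ((2 ^ J * m : ℕ) : ℝ) = (2:ℝ) ^ ((J:ℝ)) * m := by
          push_cast
          rw [← Real.rpow_natCast (2 : ℝ) J]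
        rw [hcast2, ht_def, ← Real.rpow_natCast ((2:ℝ) ^ (1 - α * r)) J,
          ← Real.rpow_mul (by norm_num)]
        rw [show (2:ℝ) ^ ((J:ℝ)) * (m:ℝ) * (C ^ r * σ m ^ r * (2:ℝ) ^ (-((J : ℝ) * α) * r))
            = C ^ r * σ m ^ r * (m:ℝ) * ((2:ℝ) ^ ((J:ℝ)) * (2:ℝ) ^ (-((J : ℝ) * α) * r))
            by ring]
        rw [← Real.rpow_add two_pos]
        ring_nf
      calc S r σ m ≤ C ^ r * σ m ^ r * m * (∑ j ∈ Finset.range J, t ^ j)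
            + S r σ (2 ^ J * m) := ih
        _ ≤ C ^ r * σ m ^ r * m * (∑ j ∈ Finset.range J, t ^ j)
            + (C ^ r * σ m ^ r * m * t ^ J + S r σ (2 ^ (J + 1) * m)) := by
            rw [hblock]
            gcongr
            exact le_trans hbu hterm
        _ = C ^ r * σ m ^ r * m * (∑ j ∈ Finset.range (J + 1), t ^ j)
            + S r σ (2 ^ (J + 1) * m) := by
            rw [Finset.sum_range_succ]; ring
  have ht1' : (0:ℝ) < 1 - t := by linarith
  refine ⟨C ^ r * (1 - t)⁻¹, by positivity, fun m hm => ?_⟩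
  have hσm := hpos m hm
  have hgeom : HasSum (fun j : ℕ => t ^ j) (1 - t)⁻¹ :=
    hasSum_geometric_of_lt_one ht0.le ht1
  have hlimS : Tendsto (fun J : ℕ => S r σ (2 ^ J * m)) atTop (nhds 0) := by
    apply (S_tendsto hpos hsum).comp
    exact tendsto_atTop_mono
      (fun J => Nat.le_mul_of_pos_right (2 ^ J) (show 0 < m by omega))
      (tendsto_pow_atTop_atTop_of_one_lt one_lt_two)
  have hfull : Tendsto (fun J : ℕ =>
      C ^ r * σ m ^ r * m * (∑ j ∈ Finset.range J, t ^ j) + S r σ (2 ^ J * m)) atTop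
      (nhds (C ^ r * σ m ^ r * m * (1 - t)⁻¹ + 0)) :=
    ((hgeom.tendsto_sum_nat).const_mul _).add hlimS
  have := ge_of_tendsto' hfull (fun J => key m hm J)
  rw [add_zero] at this
  calc S r σ m ≤ C ^ r * σ m ^ r * m * (1 - t)⁻¹ := this
    _ = C ^ r * (1 - t)⁻¹ * m * σ m ^ r := by ring


lemma S_ge (hr : 0 < r) (hpos : ∀ k, 1 ≤ k → 0 < σ k)
    (hanti : ∀ m n : ℕ, 1 ≤ m → m ≤ n → σ n ≤ σ m)
    (hsum : Summable (fun k : ℕ => if 1 ≤ k then σ k ^ r else 0))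
    {m n : ℕ} (hm : 1 ≤ m) (hmn : m ≤ n) :
    ((n + 1 - m : ℕ) : ℝ) * σ n ^ r ≤ S r σ m := by
  have hn : 1 ≤ n := le_trans hm hmn
  have hb := block hpos hsum hm (show m ≤ n + 1 by omega)
  have hlow : ((n + 1 - m : ℕ) : ℝ) * σ n ^ r ≤ ∑ k ∈ Finset.Ico m (n + 1), σ k ^ r := by
    calc ((n + 1 - m : ℕ) : ℝ) * σ n ^ r = ∑ _k ∈ Finset.Ico m (n + 1), σ n ^ r := by
          rw [Finset.sum_const, Nat.card_Ico, nsmul_eq_mul]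
      _ ≤ ∑ k ∈ Finset.Ico m (n + 1), σ k ^ r := by
          apply Finset.sum_le_sum
          intro k hk
          have hk1 := Finset.mem_Ico.mp hk
          exact Real.rpow_le_rpow (hpos n hn).le
            (hanti k n (le_trans hm hk1.1) (by omega)) hr.le
  have hS : 0 ≤ S r σ (n + 1) := S_nonneg hpos (n + 1) (by omega)
  linarith

lemma rpow_cancel (hr : 0 < r) {x : ℝ} (hx : 0 ≤ x) : (x ^ r) ^ (1 / r) = x := by
  rw [← Real.rpow_mul hx, mul_one_div, div_self hr.ne', Real.rpow_one]

lemma of_rpow (hr : 0 < r) {x y d : ℝ} (hx : 0 ≤ x) (hy : 0 ≤ y) (hd : 0 ≤ d)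
    (h : d * x ^ (1 / r) ≤ y ^ (1 / r)) : d ^ r * x ≤ y := by
  have h2 := Real.rpow_le_rpow (by positivity) h hr.le
  rwa [Real.mul_rpow hd (Real.rpow_nonneg hx _), ← Real.rpow_mul hx,
    one_div_mul_cancel hr.ne', Real.rpow_one, ← Real.rpow_mul hy,
    one_div_mul_cancel hr.ne', Real.rpow_one] at h2

lemma forward_dir (hr : 0 < r) (hpos : ∀ k, 1 ≤ k → 0 < σ k)
    (hanti : ∀ m n : ℕ, 1 ≤ m → m ≤ n → σ n ≤ σ m)
    (hsum : Summable (fun k : ℕ => if 1 ≤ k then σ k ^ r else 0))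
    (h : ∃ c₁ c₂ : ℝ, 0 < c₁ ∧ 0 < c₂ ∧ ∀ n : ℕ, 1 ≤ n →
        c₁ * σ n ≤ σ (2 * n) ∧ σ (2 * n) ≤ c₂ * σ n) :
    ∃ d₁ d₂ : ℝ, 0 < d₁ ∧ 0 < d₂ ∧ ∀ n : ℕ, 1 ≤ n →
        d₁ * (S r σ n) ^ (1 / r) ≤ (S r σ (2 * n)) ^ (1 / r) ∧
        (S r σ (2 * n)) ^ (1 / r) ≤ d₂ * (S r σ n) ^ (1 / r) := by
  obtain ⟨c₁, c₂, hc₁, hc₂, hc⟩ := h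
  set e : ℝ := (c₁ ^ 2) ^ r with he_def
  have he : 0 < e := Real.rpow_pos_of_pos (by positivity) _
  set D : ℝ := 1 + 1 / (2 * e) with hD_def
  clear_value e D
  have hD : 1 ≤ D := by
    rw [hD_def]
    have : 0 < 1 / (2 * e) := by positivity
    linarith
  have hD0 : 0 < D := by linarith
  refine ⟨(D ^ (1 / r))⁻¹, 1, by positivity, one_pos, fun n hn => ?_⟩
  have hn2 : 1 ≤ 2 * n := by omega
  have hSn := S_nonneg (r := r) hpos n hn
  have hS2n := S_nonneg (r := r) hpos (2 * n) hn2
  constructor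
  · -- main inequality: S n ≤ D * S (2n)
    have hkey : S r σ n ≤ D * S r σ (2 * n) := by
      have hb := block hpos hsum hn (show n ≤ 2 * n by omega)
      have hbu := block_upper hr hpos hanti hn (show n ≤ 2 * n by omega)
      have hcard : ((2 * n - n : ℕ) : ℝ) = (n : ℝ) := by congr 1; omega
      rw [hcard] at hbu
      -- lower bound for S (2n)
      have hge := S_ge hr hpos hanti hsum hn2 (show 2 * n ≤ 2 * (2 * n) by omega)
      have hcard2 : ((2 * (2 * n) + 1 - 2 * n : ℕ) : ℝ) = (2 * n + 1 : ℝ) := by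
        have h9 : (2 * (2 * n) + 1 - 2 * n : ℕ) = 2 * n + 1 := by omega
        rw [h9]; push_cast; ring
      rw [hcard2] at hge
      -- σ (4n) ≥ c₁^2 σ n
      have hσ4 : c₁ ^ 2 * σ n ≤ σ (2 * (2 * n)) := by
        have h1 := (hc n hn).1
        have h2 := (hc (2 * n) hn2).1
        nlinarith [hc₁.le]
      have hσ4r : e * σ n ^ r ≤ σ (2 * (2 * n)) ^ r := by
        rw [he_def]
        have h8 := Real.rpow_le_rpow (mul_nonneg (by positivity) (hpos n hn).le) hσ4 hr.le
        rwa [Real.mul_rpow (by positivity) (hpos n hn).le] at h8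
      have hσnr : (0:ℝ) ≤ σ n ^ r := Real.rpow_nonneg (hpos n hn).le _
      have hchain : (n : ℝ) * σ n ^ r ≤ S r σ (2 * n) / (2 * e) := by
        rw [le_div_iff₀ (by positivity)]
        calc (n : ℝ) * σ n ^ r * (2 * e) = (2 * n : ℝ) * (e * σ n ^ r) := by ring
          _ ≤ (2 * n + 1 : ℝ) * σ (2 * (2 * n)) ^ r := by
              have hn0 : (0:ℝ) ≤ (2 * n : ℝ) := by positivity
              have := mul_le_mul_of_nonneg_left hσ4r hn0
              nlinarith [Real.rpow_nonneg (hpos (2 * (2 * n)) (by omega)).le r]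
          _ ≤ S r σ (2 * n) := hge
      rw [hb]
      have : S r σ (2 * n) / (2 * e) = 1 / (2 * e) * S r σ (2 * n) := by ring
      rw [hD_def]
      push_cast at hbu ⊢
      nlinarith [hchain, hbu]
    -- convert to rpow inequality
    have h2 : (S r σ n) ^ (1 / r) ≤ (D * S r σ (2 * n)) ^ (1 / r) :=
      Real.rpow_le_rpow hSn hkey (by positivity)
    rw [Real.mul_rpow hD0.le hS2n] at h2
    rw [inv_mul_le_iff₀ (by positivity)]
    exact h2
  · rw [one_mul]
    exact Real.rpow_le_rpow hS2n (S_anti hpos hsum hn (by omega)) (by positivity)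


lemma backward_dir (hr : 0 < r) (hpos : ∀ k, 1 ≤ k → 0 < σ k)
    (hanti : ∀ m n : ℕ, 1 ≤ m → m ≤ n → σ n ≤ σ m)
    (hsum : Summable (fun k : ℕ => if 1 ≤ k then σ k ^ r else 0))
    {α C : ℝ} (hα : 1 / r < α)
    (hreg : ∀ k n : ℕ, 1 ≤ k → k ≤ n → σ n * (n : ℝ) ^ α / (σ k * (k : ℝ) ^ α) ≤ C)
    (h : ∃ d₁ d₂ : ℝ, 0 < d₁ ∧ 0 < d₂ ∧ ∀ n : ℕ, 1 ≤ n →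
        d₁ * (S r σ n) ^ (1 / r) ≤ (S r σ (2 * n)) ^ (1 / r) ∧
        (S r σ (2 * n)) ^ (1 / r) ≤ d₂ * (S r σ n) ^ (1 / r)) :
    ∃ c₁ c₂ : ℝ, 0 < c₁ ∧ 0 < c₂ ∧ ∀ n : ℕ, 1 ≤ n →
        c₁ * σ n ≤ σ (2 * n) ∧ σ (2 * n) ≤ c₂ * σ n := by
  obtain ⟨d₁, d₂, hd₁, hd₂, hd⟩ := h
  obtain ⟨K, hK, hSle⟩ := S_le_of_reg hr hpos hanti hsum hα hreg
  set e : ℝ := d₁ ^ r with he_def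
  clear_value e
  have he : 0 < e := by rw [he_def]; exact Real.rpow_pos_of_pos hd₁ _
  set A : ℝ := 4 * K / e ^ 2 with hA_def
  clear_value A
  have hA : 0 < A := by rw [hA_def]; positivity
  refine ⟨((A : ℝ) ^ (1 / r))⁻¹, 1, by positivity, one_pos, fun n hn => ?_⟩
  constructor
  · -- main lower bound
    set m : ℕ := (n + 1) / 2 with hm_def
    have hm1 : 1 ≤ m := by omega
    have hmn : m ≤ n := by omega
    have hn2m : n ≤ 2 * m := by omega
    -- e * S m ≤ S (2m)
    have h1 : e * S r σ m ≤ S r σ (2 * m) := by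
      rw [he_def]
      exact of_rpow hr (S_nonneg (r := r) hpos m hm1)
        (S_nonneg (r := r) hpos (2 * m) (by omega)) hd₁.le (hd m hm1).1
    have h2 : S r σ (2 * m) ≤ S r σ n := S_anti hpos hsum hn hn2m
    have h3 : ((n + 1 - m : ℕ) : ℝ) * σ n ^ r ≤ S r σ m :=
      S_ge hr hpos hanti hsum hm1 hmn
    have h4 : e * S r σ n ≤ S r σ (2 * n) := by
      rw [he_def]
      exact of_rpow hr (S_nonneg (r := r) hpos n hn)
        (S_nonneg (r := r) hpos (2 * n) (by omega)) hd₁.le (hd n hn).1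
    have h5 : S r σ (2 * n) ≤ K * (2 * n : ℕ) * σ (2 * n) ^ r := hSle (2 * n) (by omega)
    have hcount : (n : ℝ) / 2 ≤ ((n + 1 - m : ℕ) : ℝ) := by
      have h9 : n ≤ 2 * (n + 1 - m) := by omega
      have h10 : (n : ℝ) ≤ 2 * ((n + 1 - m : ℕ) : ℝ) := by exact_mod_cast h9
      linarith
    have hσnr : (0:ℝ) ≤ σ n ^ r := Real.rpow_nonneg (hpos n hn).le _
    have hσ2nr : (0:ℝ) ≤ σ (2 * n) ^ r := Real.rpow_nonneg (hpos (2 * n) (by omega)).le _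
    -- chain
    have hchain : e ^ 2 * ((n : ℝ) / 2) * σ n ^ r ≤ K * (2 * (n : ℝ)) * σ (2 * n) ^ r := by
      have s1 : e ^ 2 * ((n : ℝ) / 2) * σ n ^ r ≤ e ^ 2 * ((n + 1 - m : ℕ) : ℝ) * σ n ^ r := by
        have := mul_le_mul_of_nonneg_right
          (mul_le_mul_of_nonneg_left hcount (by positivity : (0:ℝ) ≤ e ^ 2)) hσnr
        linarith
      have s2 : e ^ 2 * (((n + 1 - m : ℕ) : ℝ) * σ n ^ r) ≤ e ^ 2 * S r σ m := by
        have := mul_le_mul_of_nonneg_left h3 (by positivity : (0:ℝ) ≤ e ^ 2)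
        linarith
      have s3 : e * (e * S r σ m) ≤ e * S r σ (2 * m) :=
        mul_le_mul_of_nonneg_left h1 he.le
      have s4 : e * S r σ (2 * m) ≤ e * S r σ n := mul_le_mul_of_nonneg_left h2 he.le
      have s6 : K * ((2 * n : ℕ) : ℝ) = K * (2 * (n : ℝ)) := by push_cast; ring
      nlinarith [h4, h5]
    -- divide by n and conclude σ n ^ r ≤ A * σ (2n) ^ r
    have hnR : (0:ℝ) < (n : ℝ) := by exact_mod_cast hn
    have hrpow : σ n ^ r ≤ A * σ (2 * n) ^ r := by
      rw [hA_def]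
      rw [div_mul_eq_mul_div, le_div_iff₀ (by positivity)]
      nlinarith [hchain]
    -- extract root
    have hfin : σ n ≤ A ^ (1 / r) * σ (2 * n) := by
      have := Real.rpow_le_rpow hσnr hrpow (by positivity : (0:ℝ) ≤ 1 / r)
      rwa [rpow_cancel hr (hpos n hn).le,
        Real.mul_rpow hA.le hσ2nr,
        rpow_cancel hr (hpos (2 * n) (by omega)).le] at this
    rw [inv_mul_le_iff₀ (by positivity)]
    exact hfin
  · rw [one_mul]
    exact hanti n (2 * n) hn (by omega)

end S19


/-- The tail sequence `τ_n = (∑_{k ≥ n} σ_k^r)^{1/r}` of a sequence `σ` indexed from 1. -/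
noncomputable def tailSeq (r : ℝ) (σ : ℕ → ℝ) (n : ℕ) : ℝ :=
  (∑' k : ℕ, if n ≤ k then σ k ^ r else 0) ^ (1 / r)

/-- **Lemma (Tail Sequence), part (iii).**
For `r > 0` and a non-increasing positive sequence `σ` (indexed from 1) tending to zero
with `∑_{k≥1} σ_k^r < ∞`: the doubling condition `σ_n ≍ σ_{2n}` implies the doubling
condition `τ_n ≍ τ_{2n}` for the tail sequence; and if in addition
`∃ α > 1/r, sup_{k ≤ n} σ_n n^α / (σ_k k^α) < ∞` holds, then `σ_n ≍ σ_{2n}` holds if and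
only if `τ_n ≍ τ_{2n}` holds. -/
theorem statement19 (r : ℝ) (hr : 0 < r) (σ : ℕ → ℝ)
    (hpos : ∀ k, 1 ≤ k → 0 < σ k)
    (hanti : ∀ m n : ℕ, 1 ≤ m → m ≤ n → σ n ≤ σ m)
    (hlim : Tendsto σ atTop (nhds 0))
    (hsum : Summable (fun k : ℕ => if 1 ≤ k then σ k ^ r else 0)) :
    ((∃ c₁ c₂ : ℝ, 0 < c₁ ∧ 0 < c₂ ∧ ∀ n : ℕ, 1 ≤ n →
        c₁ * σ n ≤ σ (2 * n) ∧ σ (2 * n) ≤ c₂ * σ n) →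
      (∃ d₁ d₂ : ℝ, 0 < d₁ ∧ 0 < d₂ ∧ ∀ n : ℕ, 1 ≤ n →
        d₁ * tailSeq r σ n ≤ tailSeq r σ (2 * n) ∧
        tailSeq r σ (2 * n) ≤ d₂ * tailSeq r σ n)) ∧
    ((∃ α : ℝ, 1 / r < α ∧ ∃ C : ℝ, ∀ k n : ℕ, 1 ≤ k → k ≤ n →
        σ n * (n : ℝ) ^ α / (σ k * (k : ℝ) ^ α) ≤ C) →
      ((∃ c₁ c₂ : ℝ, 0 < c₁ ∧ 0 < c₂ ∧ ∀ n : ℕ, 1 ≤ n →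
          c₁ * σ n ≤ σ (2 * n) ∧ σ (2 * n) ≤ c₂ * σ n) ↔
        (∃ d₁ d₂ : ℝ, 0 < d₁ ∧ 0 < d₂ ∧ ∀ n : ℕ, 1 ≤ n →
          d₁ * tailSeq r σ n ≤ tailSeq r σ (2 * n) ∧
          tailSeq r σ (2 * n) ≤ d₂ * tailSeq r σ n))) := by
  have hconv : ∀ n, tailSeq r σ n = (S19.S r σ n) ^ (1 / r) := fun n => rfl
  have fwd : (∃ c₁ c₂ : ℝ, 0 < c₁ ∧ 0 < c₂ ∧ ∀ n : ℕ, 1 ≤ n →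
        c₁ * σ n ≤ σ (2 * n) ∧ σ (2 * n) ≤ c₂ * σ n) →
      (∃ d₁ d₂ : ℝ, 0 < d₁ ∧ 0 < d₂ ∧ ∀ n : ℕ, 1 ≤ n →
        d₁ * tailSeq r σ n ≤ tailSeq r σ (2 * n) ∧
        tailSeq r σ (2 * n) ≤ d₂ * tailSeq r σ n) := by
    intro h
    obtain ⟨d₁, d₂, h1, h2, h3⟩ := S19.forward_dir hr hpos hanti hsum h
    exact ⟨d₁, d₂, h1, h2, fun n hn => by
      rw [hconv, hconv]; exact h3 n hn⟩
  refine ⟨fwd, ?_⟩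
  rintro ⟨α, hα, C, hreg⟩
  refine ⟨fwd, ?_⟩
  rintro ⟨d₁, d₂, h1, h2, h3⟩
  exact S19.backward_dir hr hpos hanti hsum hα hreg
    ⟨d₁, d₂, h1, h2, fun n hn => by
      have := h3 n hn
      rwa [hconv, hconv] at this⟩
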